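/- Let k be a nonzero integer and η a real number. Then for every t ≥ 0, e^{−∫₀ᵗ ((k s − η)² + k²) ds} · ∫₀ᵗ e^{∫₀^τ ((k s − η)² + k²) ds} dτ ≤ C / ((k t − η)² + k²) for an absolute constant C > 0. -/

import Mathlib

open Real intervalIntegral

theorem stmt_8 :
    ∃ C > (0:ℝ), ∀ k : ℤ, k ≠ 0 → ∀ η t : ℝ, 0 ≤ t →
      Real.exp (-(∫ s in (0:ℝ)..t, (((k : ℝ) * s - η) ^ 2 + (k : ℝ) ^ 2))) *
          (∫ τ in (0:ℝ)..t,
            Real.exp (∫ s in (0:ℝ)..τ, (((k : ℝ) * s - η) ^ 2 + (k : ℝ) ^ 2)))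
        ≤ C / (((k : ℝ) * t - η) ^ 2 + (k : ℝ) ^ 2) := by
  refine ⟨4, by norm_num, ?_⟩
  intro k hk η t ht
  set kr : ℝ := (k : ℝ) with hkr
  have hk0 : kr ≠ 0 := Int.cast_ne_zero.mpr hk
  have hk2 : 0 < kr ^ 2 := by positivity
  set M : ℝ := (kr * t - η) ^ 2 + kr ^ 2 with hM
  have hM0 : 0 < M := by positivity
  set p : ℝ → ℝ := fun s => (kr * s - η) ^ 2 + kr ^ 2 with hp
  have hpc : Continuous p := by fun_prop
  have hint : ∀ a b : ℝ, IntervalIntegrable p MeasureTheory.volume a b :=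
    fun a b => hpc.intervalIntegrable a b
  -- explicit integral of p
  have hform : ∀ y x : ℝ, (∫ s in y..x, p s) =
      (x - y) * (((kr * x - η) ^ 2 + (kr * x - η) * (kr * y - η) + (kr * y - η) ^ 2) / 3 + kr ^ 2) := by
    intro y x
    have hderiv : ∀ s : ℝ, HasDerivAt (fun s => (kr * s - η) ^ 3 / (3 * kr) + kr ^ 2 * s) (p s) s := by
      intro s
      have h1 : HasDerivAt (fun s : ℝ => kr * s - η) kr s := by
        simpa using ((hasDerivAt_id s).const_mul kr).sub_const η
      have h2 := ((h1.pow 3).div_const (3 * kr)).add ((hasDerivAt_id s).const_mul (kr ^ 2))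
      refine h2.congr_deriv ?_
      field_simp [hp]
      ring
    rw [intervalIntegral.integral_eq_sub_of_hasDerivAt (fun s _ => hderiv s)
      (hpc.intervalIntegrable y x)]
    field_simp
    ring
  -- key lower bound
  have hkey : ∀ τ : ℝ, 0 ≤ τ → τ ≤ t → (t - τ) * (M / 4) ≤ ∫ s in τ..t, p s := by
    intro τ hτ0 hτt
    rw [hform τ t]
    have hs : (0:ℝ) ≤ (kr * t - η + 2 * (kr * τ - η)) ^ 2 := sq_nonneg _
    nlinarith [mul_nonneg (sub_nonneg.mpr hτt) hs, sq_nonneg (kr * t - η), hk2,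
      mul_nonneg (sub_nonneg.mpr hτt) hk2.le,
      mul_nonneg (sub_nonneg.mpr hτt) (sq_nonneg (kr * t - η))]
  -- rewrite LHS as a single integral
  have hLHS : Real.exp (-(∫ s in (0:ℝ)..t, p s)) * (∫ τ in (0:ℝ)..t, Real.exp (∫ s in (0:ℝ)..τ, p s))
      = ∫ τ in (0:ℝ)..t, Real.exp ((∫ s in (0:ℝ)..τ, p s) - (∫ s in (0:ℝ)..t, p s)) := by
    rw [← intervalIntegral.integral_const_mul]
    congr 1
    ext τ
    rw [← Real.exp_add]
    congr 1
    ring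
  have hsplit : ∀ τ : ℝ, (∫ s in (0:ℝ)..τ, p s) - (∫ s in (0:ℝ)..t, p s) = -(∫ s in τ..t, p s) := by
    intro τ
    have := intervalIntegral.integral_add_adjacent_intervals
      (hint 0 τ) (hint τ t)
    linarith
  -- compare integrands
  have hmono : (∫ τ in (0:ℝ)..t, Real.exp ((∫ s in (0:ℝ)..τ, p s) - (∫ s in (0:ℝ)..t, p s)))
      ≤ ∫ τ in (0:ℝ)..t, Real.exp (τ * (M / 4) - t * (M / 4)) := by
    apply intervalIntegral.integral_mono_on ht
    · apply Continuous.intervalIntegrable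
      have : Continuous fun τ => ∫ s in (0:ℝ)..τ, p s :=
        intervalIntegral.continuous_primitive hint 0
      fun_prop
    · apply Continuous.intervalIntegrable; fun_prop
    · intro τ hτ
      rw [hsplit τ]
      apply Real.exp_le_exp.mpr
      have := hkey τ hτ.1 hτ.2
      nlinarith
  -- compute the comparison integral
  have hG : ∀ τ : ℝ, HasDerivAt (fun τ => (4 / M) * Real.exp (τ * (M / 4) - t * (M / 4)))
      (Real.exp (τ * (M / 4) - t * (M / 4))) τ := by
    intro τ
    have h1 : HasDerivAt (fun τ : ℝ => τ * (M / 4) - t * (M / 4)) (M / 4) τ :=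
      (hasDerivAt_mul_const (M / 4)).sub_const _
    have h2 := (h1.exp).const_mul (4 / M)
    refine h2.congr_deriv ?_
    field_simp
  have hcomp : (∫ τ in (0:ℝ)..t, Real.exp (τ * (M / 4) - t * (M / 4))) ≤ 4 / M := by
    rw [intervalIntegral.integral_eq_sub_of_hasDerivAt (fun τ _ => hG τ)
      (by apply Continuous.intervalIntegrable; fun_prop)]
    have h1 : Real.exp (t * (M / 4) - t * (M / 4)) = 1 := by simp
    have h2 : 0 ≤ (4 / M) * Real.exp ((0:ℝ) * (M / 4) - t * (M / 4)) := by positivity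
    nlinarith [Real.exp_pos ((0:ℝ) * (M / 4) - t * (M / 4))]
  calc Real.exp (-(∫ s in (0:ℝ)..t, p s)) * (∫ τ in (0:ℝ)..t, Real.exp (∫ s in (0:ℝ)..τ, p s))
      = ∫ τ in (0:ℝ)..t, Real.exp ((∫ s in (0:ℝ)..τ, p s) - (∫ s in (0:ℝ)..t, p s)) := hLHS
    _ ≤ ∫ τ in (0:ℝ)..t, Real.exp (τ * (M / 4) - t * (M / 4)) := hmono
    _ ≤ 4 / M := hcomp
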